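/- For every integer d ≥ 1 and every integer N ≥ 1, there exists a recoloring algorithm A on the vertex set V = {1,…,N} such that for every update sequence G₀, G₁, …, G_m: (i) every coloring produced by A takes values in {1, …, (d + 1)·C}, where C = max_{0 ≤ t ≤ m} χ(G_t); and (ii) the total number of recolorings performed over the m updates is at most (d + 1)·⌈N^{1/d}⌉·m. In particular, the algorithm is O(d)-competitive and performs O(d·N^{1/d}) amortized vertex recolorings per update. -/

import Mathlib

/-- `H` is obtained from `G` by inserting or deleting exactly one edge. -/
def isStep {V : Type*} (G H : SimpleGraph V) : Prop :=
  ∃ u v : V, u ≠ v ∧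
    ((¬ G.Adj u v ∧ H = G ⊔ SimpleGraph.fromEdgeSet {s(u, v)}) ∨
     (G.Adj u v ∧ H = G \ SimpleGraph.fromEdgeSet {s(u, v)}))

/-- `f` is a proper (ℕ-valued) coloring of `G`. -/
def IsProperNat {V : Type*} (G : SimpleGraph V) (f : V → ℕ) : Prop :=
  ∀ ⦃u v⦄, G.Adj u v → f u ≠ f v

/-- Number of vertices on which the colorings `f` and `g` differ. -/
def recount {N : ℕ} (f g : Fin N → ℕ) : ℕ :=
  (Finset.univ.filter fun v => f v ≠ g v).card

namespace BigBuckets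

open Finset

/-- The state of the algorithm: a bucket level for every vertex, and a coloring. -/
structure St (N : ℕ) where
  level : Fin N → ℕ
  col : Fin N → ℕ

/-- Capacity of bucket `i` : `⌈N^{i/d}⌉`. -/
noncomputable def cap (d N i : ℕ) : ℕ := ⌈(N : ℝ) ^ ((i : ℝ) / (d : ℝ))⌉₊

lemma cap_pos (d N : ℕ) (hN : 1 ≤ N) (i : ℕ) : 1 ≤ cap d N i := by
  have h1 : (1:ℝ) ≤ (N:ℝ) ^ ((i:ℝ)/(d:ℝ)) :=
    Real.one_le_rpow (by exact_mod_cast hN) (by positivity)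
  have : (0:ℝ) < (N:ℝ) ^ ((i:ℝ)/(d:ℝ)) := lt_of_lt_of_le one_pos h1
  exact Nat.one_le_ceil_iff.mpr this

lemma cap_d (d N : ℕ) (hd : 1 ≤ d) : cap d N d = N := by
  have hd0 : (d:ℝ) ≠ 0 := by positivity
  rw [cap, div_self hd0, Real.rpow_one, Nat.ceil_natCast]

lemma cap_le_mul (d N : ℕ) (hN : 1 ≤ N) {i : ℕ} (hi : 1 ≤ i) :
    cap d N i ≤ cap d N 1 * cap d N (i - 1) := by
  have hN0 : (0:ℝ) < (N:ℝ) := by exact_mod_cast hN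
  have hsplit : ((i:ℝ)/(d:ℝ)) = ((1:ℕ):ℝ)/(d:ℝ) + ((i-1:ℕ):ℝ)/(d:ℝ) := by
    rw [Nat.cast_sub hi]
    push_cast
    ring
  rw [cap, hsplit, Real.rpow_add hN0]
  refine Nat.ceil_le.mpr ?_
  rw [Nat.cast_mul]
  have h1 := Nat.le_ceil ((N:ℝ) ^ (((1:ℕ):ℝ)/(d:ℝ)))
  have h2 := Nat.le_ceil ((N:ℝ) ^ (((i-1:ℕ):ℝ)/(d:ℝ)))
  have hp1 : (0:ℝ) ≤ (N:ℝ) ^ (((1:ℕ):ℝ)/(d:ℝ)) := Real.rpow_nonneg hN0.le _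
  exact mul_le_mul h1 h2 (Real.rpow_nonneg hN0.le _) (le_trans hp1 h1)

/-- The set of vertices in buckets `≤ i`, together with `u`. -/
def bucketSet {N : ℕ} (st : St N) (u : Fin N) (i : ℕ) : Finset (Fin N) :=
  (Finset.univ.filter fun w => st.level w ≤ i) ∪ {u}

lemma exists_idx {N : ℕ} (d : ℕ) (hd : 1 ≤ d) (st : St N) (u : Fin N) :
    ∃ i, 1 ≤ i ∧ i ≤ d ∧ (bucketSet st u i).card ≤ cap d N i := by
  refine ⟨d, hd, le_refl d, ?_⟩
  rw [cap_d d N hd]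
  calc (bucketSet st u d).card ≤ (Finset.univ : Finset (Fin N)).card := card_le_univ _
    _ = N := by simp

open Classical in
/-- The bucket chosen for recoloring: the least feasible one. -/
noncomputable def idx {N : ℕ} (d : ℕ) (hd : 1 ≤ d) (st : St N) (u : Fin N) : ℕ :=
  Nat.find (exists_idx d hd st u)

open Classical in
lemma idx_spec {N : ℕ} (d : ℕ) (hd : 1 ≤ d) (st : St N) (u : Fin N) :
    1 ≤ idx d hd st u ∧ idx d hd st u ≤ d ∧
      (bucketSet st u (idx d hd st u)).card ≤ cap d N (idx d hd st u) :=
  Nat.find_spec (exists_idx d hd st u)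

open Classical in
lemma idx_min {N : ℕ} (d : ℕ) (hd : 1 ≤ d) (st : St N) (u : Fin N) {j : ℕ}
    (hj : j < idx d hd st u) :
    ¬ (1 ≤ j ∧ j ≤ d ∧ (bucketSet st u j).card ≤ cap d N j) :=
  Nat.find_min (exists_idx d hd st u) hj

/-- An optimal coloring of a finite graph. -/
noncomputable def optCol {N : ℕ} (G : SimpleGraph (Fin N)) :
    G.Coloring (Fin G.chromaticNumber.toNat) :=
  (G.colorable_chromaticNumber_of_fintype).some

/-- Recolor all of buckets `1..i` together with `u` into bucket `i`, using the palette
of colors congruent to `i` mod `d+1`. -/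
noncomputable def recolor {N : ℕ} (d : ℕ) (st : St N) (Gn : SimpleGraph (Fin N))
    (u : Fin N) (i : ℕ) : St N where
  level := fun w => if w ∈ bucketSet st u i then i else st.level w
  col := fun w => if w ∈ bucketSet st u i then (optCol Gn w : ℕ) * (d+1) + i else st.col w

lemma conflict_exists {N : ℕ} {Gn : SimpleGraph (Fin N)} {f : Fin N → ℕ}
    (h : ¬ IsProperNat Gn f) : ∃ p : Fin N × Fin N, Gn.Adj p.1 p.2 ∧ f p.1 = f p.2 := by
  by_contra hc
  push_neg at hc
  exact h fun u v ha => hc (u, v) ha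

open Classical in
/-- One step of the big-buckets algorithm. -/
noncomputable def bbStep {N : ℕ} (d : ℕ) (hd : 1 ≤ d) (st : St N)
    (Gn : SimpleGraph (Fin N)) : St N :=
  if hpr : IsProperNat Gn st.col then st
  else
    recolor d st Gn (conflict_exists hpr).choose.1
      (idx d hd st (conflict_exists hpr).choose.1)

open Classical in
lemma bbStep_of_proper {N : ℕ} (d : ℕ) (hd : 1 ≤ d) (st : St N)
    {Gn : SimpleGraph (Fin N)} (hpr : IsProperNat Gn st.col) :
    bbStep d hd st Gn = st := by
  unfold bbStep
  rw [dif_pos hpr]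

open Classical in
lemma bbStep_of_not {N : ℕ} (d : ℕ) (hd : 1 ≤ d) (st : St N)
    {Gn : SimpleGraph (Fin N)} (hpr : ¬ IsProperNat Gn st.col) :
    bbStep d hd st Gn = recolor d st Gn (conflict_exists hpr).choose.1
      (idx d hd st (conflict_exists hpr).choose.1) := by
  unfold bbStep
  rw [dif_neg hpr]

/-- The potential function. -/
noncomputable def pot {N : ℕ} (d : ℕ) (st : St N) : ℕ :=
  cap d N 1 * ∑ v : Fin N, (d - st.level v)

lemma recolor_main {N : ℕ} (d : ℕ) (hd : 1 ≤ d) (hN : 1 ≤ N)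
    (Gn : SimpleGraph (Fin N)) (st : St N) (C' : ℕ)
    (hχ : Gn.chromaticNumber.toNat ≤ C')
    (u : Fin N) (i : ℕ)
    (h1 : ∀ v, 1 ≤ st.level v ∧ st.level v ≤ d)
    (hold : ∀ x y, Gn.Adj x y → st.col x = st.col y → (x = u ∨ y = u))
    (h3 : ∀ v, ∃ c, c < C' ∧ st.col v = c * (d+1) + st.level v)
    (hi1 : 1 ≤ i) (hid : i ≤ d)
    (hcard : (bucketSet st u i).card ≤ cap d N i)
    (hprev : 2 ≤ i → cap d N (i-1) < (bucketSet st u (i-1)).card) :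
    (∀ v, 1 ≤ (recolor d st Gn u i).level v ∧ (recolor d st Gn u i).level v ≤ d) ∧
    IsProperNat Gn (recolor d st Gn u i).col ∧
    (∀ v, ∃ c, c < C' ∧
      (recolor d st Gn u i).col v = c * (d+1) + (recolor d st Gn u i).level v) ∧
    recount st.col (recolor d st Gn u i).col + pot d (recolor d st Gn u i)
      ≤ pot d st + cap d N 1 * d := by
  set S : Finset (Fin N) := bucketSet st u i with hS
  have hu_mem : u ∈ S := Finset.mem_union_right _ (Finset.mem_singleton_self u)
  have hmemS : ∀ v : Fin N, v ∈ S ↔ st.level v ≤ i ∨ v = u := by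
    intro v
    simp [hS, bucketSet]
    exact Or.comm
  have hlev : ∀ v, (recolor d st Gn u i).level v = if v ∈ S then i else st.level v := by
    intro v; rfl
  have hcol : ∀ v, (recolor d st Gn u i).col v =
      if v ∈ S then (optCol Gn v : ℕ) * (d+1) + i else st.col v := by
    intro v; rfl
  -- properness
  have hproper : IsProperNat Gn (recolor d st Gn u i).col := by
    intro x y hadj heq
    rw [hcol, hcol] at heq
    by_cases hx : x ∈ S <;> by_cases hy : y ∈ S
    · rw [if_pos hx, if_pos hy] at heq
      have h5 : (optCol Gn x : ℕ) * (d+1) = (optCol Gn y : ℕ) * (d+1) := by omega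
      have h6 : (optCol Gn x : ℕ) = (optCol Gn y : ℕ) :=
        Nat.eq_of_mul_eq_mul_right (by omega) h5
      exact (optCol Gn).valid hadj (Fin.val_injective h6)
    · rw [if_pos hx, if_neg hy] at heq
      obtain ⟨c, hc, hcy⟩ := h3 y
      have hly : ¬ st.level y ≤ i := fun h => hy ((hmemS y).mpr (Or.inl h))
      have hlyd : st.level y ≤ d := (h1 y).2
      have h5 : ((optCol Gn x : ℕ) * (d+1) + i) % (d+1) = (c * (d+1) + st.level y) % (d+1) := by
        rw [heq, hcy]
      rw [mul_comm ((optCol Gn x : ℕ)) (d+1), mul_comm c (d+1), Nat.mul_add_mod,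
        Nat.mul_add_mod, Nat.mod_eq_of_lt (by omega), Nat.mod_eq_of_lt (by omega)] at h5
      omega
    · rw [if_neg hx, if_pos hy] at heq
      obtain ⟨c, hc, hcx⟩ := h3 x
      have hlx : ¬ st.level x ≤ i := fun h => hx ((hmemS x).mpr (Or.inl h))
      have hlxd : st.level x ≤ d := (h1 x).2
      have h5 : (c * (d+1) + st.level x) % (d+1) = ((optCol Gn y : ℕ) * (d+1) + i) % (d+1) := by
        rw [← heq, hcx]
      rw [mul_comm ((optCol Gn y : ℕ)) (d+1), mul_comm c (d+1), Nat.mul_add_mod,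
        Nat.mul_add_mod, Nat.mod_eq_of_lt (by omega), Nat.mod_eq_of_lt (by omega)] at h5
      omega
    · rw [if_neg hx, if_neg hy] at heq
      rcases hold x y hadj heq with h | h
      · exact hx (h ▸ hu_mem)
      · exact hy (h ▸ hu_mem)
  refine ⟨?_, hproper, ?_, ?_⟩
  · intro v
    rw [hlev]
    split_ifs
    · exact ⟨hi1, hid⟩
    · exact h1 v
  · intro v
    rw [hcol, hlev]
    by_cases hv : v ∈ S
    · rw [if_pos hv, if_pos hv]
      exact ⟨(optCol Gn v : ℕ), lt_of_lt_of_le (optCol Gn v).isLt hχ, rfl⟩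
    · rw [if_neg hv, if_neg hv]
      exact h3 v
  -- the potential inequality
  · set T : Finset (Fin N) := (Finset.univ.filter fun w => st.level w ≤ i-1).erase u with hT
    have hmemT : ∀ v : Fin N, v ∈ T ↔ v ≠ u ∧ st.level v ≤ i - 1 := by
      intro v
      simp [hT]
    -- Step A : recount ≤ S.card
    have hA : recount st.col (recolor d st Gn u i).col ≤ S.card := by
      apply Finset.card_le_card
      intro v hv
      rw [Finset.mem_filter] at hv
      by_contra hvS
      exact hv.2 (by rw [hcol, if_neg hvS])
    -- Step B : cap i ≤ cap 1 * (T.card + 1)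
    have hB : cap d N i ≤ cap d N 1 * (T.card + 1) := by
      by_cases h2i : 2 ≤ i
      · have hlt := hprev h2i
        have hb1 : (bucketSet st u (i-1)).card ≤
            (Finset.univ.filter fun w => st.level w ≤ i-1).card + 1 := by
          calc (bucketSet st u (i-1)).card
              ≤ (Finset.univ.filter fun w => st.level w ≤ i-1).card + ({u} : Finset (Fin N)).card :=
                Finset.card_union_le _ _
            _ = _ := by rw [Finset.card_singleton]
        have hb2 : (Finset.univ.filter fun w => st.level w ≤ i-1).card ≤ T.card + 1 := by
          by_cases hu2 : u ∈ (Finset.univ.filter fun w => st.level w ≤ i-1)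
          · have hce := Finset.card_erase_of_mem hu2
            rw [← hT] at hce
            have hpos : 1 ≤ (Finset.univ.filter fun w => st.level w ≤ i-1).card :=
              Finset.card_pos.mpr ⟨u, hu2⟩
            omega
          · rw [hT, Finset.erase_eq_of_notMem hu2]
            omega
        have hcap1 : cap d N (i-1) ≤ T.card + 1 := by omega
        calc cap d N i ≤ cap d N 1 * cap d N (i-1) := cap_le_mul d N hN hi1
          _ ≤ cap d N 1 * (T.card + 1) := Nat.mul_le_mul_left _ hcap1
      · have hieq : i = 1 := by omega
        subst hieq
        exact Nat.le_mul_of_pos_right _ (by omega)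
    -- Step C : sum inequality
    have hC : (∑ v : Fin N, (d - (recolor d st Gn u i).level v)) + T.card
        ≤ (∑ v : Fin N, (d - st.level v)) + (d-1) := by
      have hTc : T.card = ∑ v : Fin N, (if v ∈ T then 1 else 0) := by
        rw [Finset.sum_ite_mem, Finset.univ_inter, Finset.sum_const, smul_eq_mul, mul_one]
      have hdu : (d - 1) = ∑ v : Fin N, (if v = u then d - 1 else 0) := by
        rw [Finset.sum_ite_eq' Finset.univ u (fun _ => d - 1)]
        simp
      rw [hTc, hdu, ← Finset.sum_add_distrib, ← Finset.sum_add_distrib]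
      apply Finset.sum_le_sum
      intro v _
      rw [hlev]
      by_cases hvu : v = u
      · subst hvu
        have hvT : v ∉ T := Finset.notMem_erase v _
        rw [if_pos hu_mem, if_neg hvT, if_pos rfl]
        have := (h1 v).1
        omega
      · by_cases hvT : v ∈ T
        · have hle : st.level v ≤ i - 1 := ((hmemT v).mp hvT).2
          have hvS : v ∈ S := (hmemS v).mpr (Or.inl (by omega))
          rw [if_pos hvS, if_pos hvT, if_neg hvu]
          have := (h1 v).1
          omega
        · by_cases hvS : v ∈ S
          · have hle : st.level v ≤ i := by
              rcases (hmemS v).mp hvS with h | h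
              · exact h
              · exact absurd h hvu
            have hge : ¬ st.level v ≤ i - 1 := fun h => hvT ((hmemT v).mpr ⟨hvu, h⟩)
            rw [if_pos hvS, if_neg hvT, if_neg hvu]
            omega
          · rw [if_neg hvS, if_neg hvT, if_neg hvu]
    -- Step D : combine
    rw [pot, pot]
    set r := cap d N 1 with hr
    set X := ∑ v : Fin N, (d - (recolor d st Gn u i).level v) with hX
    set Y := ∑ v : Fin N, (d - st.level v) with hY
    have hrec : recount st.col (recolor d st Gn u i).col ≤ r * T.card + r := by
      calc recount st.col (recolor d st Gn u i).col ≤ S.card := hA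
        _ ≤ cap d N i := hcard
        _ ≤ r * (T.card + 1) := hB
        _ = r * T.card + r := by ring
    have hmul : r * X + r * T.card ≤ r * Y + r * (d-1) := by
      calc r * X + r * T.card = r * (X + T.card) := by ring
        _ ≤ r * (Y + (d-1)) := Nat.mul_le_mul_left r hC
        _ = r * Y + r * (d-1) := by ring
    have hrd : r * (d-1) + r = r * d := by
      have : (d - 1) + 1 = d := by omega
      calc r * (d-1) + r = r * ((d-1) + 1) := by ring
        _ = r * d := by rw [this]
    omega

lemma bbStep_main {N : ℕ} (d : ℕ) (hd : 1 ≤ d) (hN : 1 ≤ N)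
    (Gt Gn : SimpleGraph (Fin N)) (st : St N) (C C' : ℕ)
    (hCC' : C ≤ C') (hχ : Gn.chromaticNumber.toNat ≤ C')
    (hstep : isStep Gt Gn)
    (h1 : ∀ v, 1 ≤ st.level v ∧ st.level v ≤ d)
    (h2 : IsProperNat Gt st.col)
    (h3 : ∀ v, ∃ c, c < C ∧ st.col v = c * (d+1) + st.level v) :
    (∀ v, 1 ≤ (bbStep d hd st Gn).level v ∧ (bbStep d hd st Gn).level v ≤ d) ∧
    IsProperNat Gn (bbStep d hd st Gn).col ∧
    (∀ v, ∃ c, c < C' ∧ (bbStep d hd st Gn).col v = c * (d+1) + (bbStep d hd st Gn).level v) ∧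
    recount st.col (bbStep d hd st Gn).col + pot d (bbStep d hd st Gn)
      ≤ pot d st + cap d N 1 * d := by
  have h3' : ∀ v, ∃ c, c < C' ∧ st.col v = c * (d+1) + st.level v := fun v => by
    obtain ⟨c, hc, h⟩ := h3 v
    exact ⟨c, lt_of_lt_of_le hc hCC', h⟩
  by_cases hpr : IsProperNat Gn st.col
  · rw [bbStep_of_proper d hd st hpr]
    refine ⟨h1, hpr, h3', ?_⟩
    have hz : recount st.col st.col = 0 := by simp [recount]
    omega
  · rw [bbStep_of_not d hd st hpr]
    have hsp := (conflict_exists hpr).choose_spec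
    set u := (conflict_exists hpr).choose.1 with hu
    obtain ⟨hadj_uv, hcol_uv⟩ := hsp
    obtain ⟨u0, v0, hne, hcase⟩ := hstep
    rcases hcase with ⟨hnadj, hGn⟩ | ⟨hadj0, hGn⟩
    swap
    · exfalso
      apply hpr
      intro x y hxy
      rw [hGn, SimpleGraph.sdiff_adj] at hxy
      exact h2 hxy.1
    · have hGadj : ∀ x y : Fin N, Gn.Adj x y ↔ Gt.Adj x y ∨ (s(x,y) = s(u0,v0) ∧ x ≠ y) := by
        intro x y
        rw [hGn]
        simp only [SimpleGraph.sup_adj, SimpleGraph.fromEdgeSet_adj, Set.mem_singleton_iff]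
      have hpair : u = u0 ∨ u = v0 := by
        rcases (hGadj _ _).mp hadj_uv with h | h
        · exact absurd hcol_uv (h2 h)
        · rcases Sym2.eq_iff.mp h.1 with ⟨h1', _⟩ | ⟨h1', _⟩
          · exact Or.inl h1'
          · exact Or.inr h1'
      have hold : ∀ x y, Gn.Adj x y → st.col x = st.col y → (x = u ∨ y = u) := by
        intro x y hxy hcxy
        rcases (hGadj _ _).mp hxy with h | h
        · exact absurd hcxy (h2 h)
        · rcases Sym2.eq_iff.mp h.1 with ⟨hx, hy⟩ | ⟨hx, hy⟩ <;> rcases hpair with h' | h'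
          · exact Or.inl (hx.trans h'.symm)
          · exact Or.inr (hy.trans h'.symm)
          · exact Or.inr (hy.trans h'.symm)
          · exact Or.inl (hx.trans h'.symm)
      obtain ⟨hi1, hid, hicard⟩ := idx_spec d hd st u
      have hprev : 2 ≤ idx d hd st u →
          cap d N (idx d hd st u - 1) < (bucketSet st u (idx d hd st u - 1)).card := by
        intro h2i
        by_contra hcon
        push_neg at hcon
        exact idx_min d hd st u (j := idx d hd st u - 1) (by omega) ⟨by omega, by omega, hcon⟩
      exact recolor_main d hd hN Gn st C' hχ u (idx d hd st u) h1 hold h3' hi1 hid hicard hprev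

/-- Running the algorithm on a list of graphs. -/
noncomputable def run {N : ℕ} (d : ℕ) (hd : 1 ≤ d) (l : List (SimpleGraph (Fin N))) : St N :=
  l.foldl (bbStep d hd) ⟨fun _ => d, fun _ => d⟩

lemma run_succ {N : ℕ} (d : ℕ) (hd : 1 ≤ d) (G : ℕ → SimpleGraph (Fin N)) (t : ℕ) :
    run d hd ((List.range (t+2)).map G)
      = bbStep d hd (run d hd ((List.range (t+1)).map G)) (G (t+1)) := by
  have h : List.range (t+2) = List.range (t+1) ++ [t+1] := List.range_succ
  rw [h, List.map_append, run, List.foldl_append]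
  rfl

lemma run_zero {N : ℕ} (d : ℕ) (hd : 1 ≤ d) (G : ℕ → SimpleGraph (Fin N)) (hG0 : G 0 = ⊥) :
    run d hd ((List.range 1).map G) = (⟨fun _ => d, fun _ => d⟩ : St N) := by
  have h : (List.range 1).map G = [G 0] := by rw [List.range_succ, List.range_zero]; rfl
  rw [h]
  show bbStep d hd ⟨fun _ => d, fun _ => d⟩ (G 0) = _
  rw [hG0]
  exact bbStep_of_proper d hd _ (fun x y hxy => absurd hxy (by simp))

end BigBuckets

theorem bigBuckets_amortized (d N : ℕ) (hd : 1 ≤ d) (hN : 1 ≤ N) :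
    ∃ A : List (SimpleGraph (Fin N)) → (Fin N → ℕ),
      ∀ (m : ℕ) (G : ℕ → SimpleGraph (Fin N)),
        G 0 = ⊥ → (∀ t < m, isStep (G t) (G (t + 1))) →
        (∀ t ≤ m, IsProperNat (G t) (A ((List.range (t + 1)).map G))) ∧
        (∀ t ≤ m, ∀ v : Fin N,
          1 ≤ A ((List.range (t + 1)).map G) v ∧
          A ((List.range (t + 1)).map G) v ≤
            (d + 1) * ((Finset.range (m + 1)).sup fun t => ((G t).chromaticNumber).toNat)) ∧
        (∑ t ∈ Finset.range m,
            recount (A ((List.range (t + 1)).map G)) (A ((List.range (t + 2)).map G)))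
          ≤ (d + 1) * ⌈(N : ℝ) ^ ((1 : ℝ) / d)⌉₊ * m := by
  classical
  haveI : Nonempty (Fin N) := ⟨⟨0, hN⟩⟩
  refine ⟨fun l => (BigBuckets.run d hd l).col, ?_⟩
  intro m G hG0 hsteps
  set Cf : ℕ → ℕ := fun t => (Finset.range (t+1)).sup fun s => ((G s).chromaticNumber).toNat
    with hCf
  set stt : ℕ → BigBuckets.St N := fun t => BigBuckets.run d hd ((List.range (t+1)).map G)
    with hstt
  have hCmono : ∀ s t : ℕ, s ≤ t → Cf s ≤ Cf t := by
    intro s t hst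
    exact Finset.sup_mono (Finset.range_subset_range.mpr (by omega))
  have hCle : ∀ t : ℕ, ((G t).chromaticNumber).toNat ≤ Cf t := by
    intro t
    simp only [hCf]
    exact Finset.le_sup (f := fun s => ((G s).chromaticNumber).toNat)
      (Finset.mem_range.mpr (Nat.lt_succ_self t))
  have hst0 : stt 0 = (⟨fun _ => d, fun _ => d⟩ : BigBuckets.St N) :=
    BigBuckets.run_zero d hd G hG0
  have hstsucc : ∀ t : ℕ, stt (t+1) = BigBuckets.bbStep d hd (stt t) (G (t+1)) :=
    fun t => BigBuckets.run_succ d hd G t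
  -- the invariant
  have key : ∀ t, t ≤ m →
      (∀ v, 1 ≤ (stt t).level v ∧ (stt t).level v ≤ d) ∧
      IsProperNat (G t) (stt t).col ∧
      (∀ v, ∃ c, c < Cf t ∧ (stt t).col v = c * (d+1) + (stt t).level v) := by
    intro t
    induction t with
    | zero =>
      intro _
      rw [hst0]
      refine ⟨fun v => ⟨hd, le_refl d⟩, ?_, ?_⟩
      · rw [hG0]
        intro x y hxy
        simp at hxy
      · intro v
        refine ⟨0, ?_, by show d = 0 * (d+1) + d; omega⟩
        have h1 : ((G 0).chromaticNumber).toNat = 1 := by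
          rw [hG0, SimpleGraph.chromaticNumber_bot]
          rfl
        have := hCle 0
        omega
    | succ n ih =>
      intro h
      have ihn := ih (by omega)
      have hs := hsteps n (by omega)
      have hmain := BigBuckets.bbStep_main d hd hN (G n) (G (n+1)) (stt n) (Cf n) (Cf (n+1))
        (hCmono n (n+1) (by omega)) (hCle (n+1)) hs ihn.1 ihn.2.1 ihn.2.2
      rw [hstsucc n]
      exact ⟨hmain.1, hmain.2.1, hmain.2.2.1⟩
  refine ⟨?_, ?_, ?_⟩
  · intro t ht
    exact (key t ht).2.1
  · intro t ht v
    obtain ⟨c, hc, hcol⟩ := (key t ht).2.2 v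
    obtain ⟨hl1, hld⟩ := (key t ht).1 v
    constructor
    · show 1 ≤ (stt t).col v
      omega
    · show (stt t).col v ≤ (d+1) * Cf m
      have hcm : c < Cf m := lt_of_lt_of_le hc (hCmono t m ht)
      calc (stt t).col v = c * (d+1) + (stt t).level v := hcol
        _ ≤ c * (d+1) + (d+1) := Nat.add_le_add_left (by omega) _
        _ = (c+1) * (d+1) := by ring
        _ ≤ Cf m * (d+1) := Nat.mul_le_mul_right _ (by omega)
        _ = (d+1) * Cf m := mul_comm _ _
  · -- the amortized bound
    have hcap1 : BigBuckets.cap d N 1 = ⌈(N : ℝ) ^ ((1 : ℝ) / d)⌉₊ := by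
      rw [BigBuckets.cap]
      norm_num
    have claim : ∀ j, j ≤ m →
        (∑ t ∈ Finset.range j, recount ((stt t).col) ((stt (t+1)).col))
          + BigBuckets.pot d (stt j) ≤ BigBuckets.cap d N 1 * d * j := by
      intro j
      induction j with
      | zero =>
        intro _
        rw [hst0]
        simp [BigBuckets.pot]
      | succ n ih =>
        intro h
        have ihn := ih (by omega)
        have ikey := key n (by omega)
        have hs := hsteps n (by omega)
        have hmain := BigBuckets.bbStep_main d hd hN (G n) (G (n+1)) (stt n) (Cf n) (Cf (n+1))
          (hCmono n (n+1) (by omega)) (hCle (n+1)) hs ikey.1 ikey.2.1 ikey.2.2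
        have h4 := hmain.2.2.2
        rw [← hstsucc n] at h4
        rw [Finset.sum_range_succ]
        have hmulsucc : BigBuckets.cap d N 1 * d * (n+1)
            = BigBuckets.cap d N 1 * d * n + BigBuckets.cap d N 1 * d := by ring
        omega
    have hfinal := claim m (le_refl m)
    have hle : (∑ t ∈ Finset.range m, recount ((stt t).col) ((stt (t+1)).col))
        ≤ BigBuckets.cap d N 1 * d * m := by omega
    calc (∑ t ∈ Finset.range m, recount ((stt t).col) ((stt (t+1)).col))
        ≤ BigBuckets.cap d N 1 * d * m := hle
      _ ≤ (d + 1) * BigBuckets.cap d N 1 * m := by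
          have : BigBuckets.cap d N 1 * d ≤ (d + 1) * BigBuckets.cap d N 1 := by
            rw [mul_comm]
            exact Nat.mul_le_mul_right _ (by omega)
          exact Nat.mul_le_mul_right _ this
      _ = (d + 1) * ⌈(N : ℝ) ^ ((1 : ℝ) / d)⌉₊ * m := by rw [hcap1]
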